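/- Let H be an undirected weighted graph on the same vertex set as G such that w_H(A_i, B_i) \ge \alpha \cdot w_G(A_i, B_i) and \beta_1 vol_G(S) \le vol_H(S) \le \beta_2 vol_G(S) for all S \subseteq V, for constants \alpha, \beta_1, \beta_2 > 0, where (A_1,B_1),...,(A_k,B_k) are the optimal pairs achieving \bar{\rho}_G(k). Then \bar{\rho}_H(k) \ge (\alpha/\beta_2) \cdot \bar{\rho}_G(k). -/

import Mathlib

open Finset

/-- Total weight of edges between two vertex sets. -/
def cutW {V : Type*} (w : V → V → ℝ) (A B : Finset V) : ℝ :=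
  ∑ u ∈ A, ∑ v ∈ B, w u v

/-- Volume of a vertex set. -/
def volW {V : Type*} [Fintype V] (w : V → V → ℝ) (S : Finset V) : ℝ :=
  ∑ u ∈ S, ∑ v, w u v

/-- Bipartiteness ratio `\overline{φ}(A,B) = 2 w(A,B) / vol(A ∪ B)`. -/
noncomputable def phiBar {V : Type*} [Fintype V] [DecidableEq V]
    (w : V → V → ℝ) (A B : Finset V) : ℝ :=
  2 * cutW w A B / volW w (A ∪ B)

/-- A valid family of `k` pairs for the `k`-way dual Cheeger constant. -/
def ValidPairs {V : Type*} [DecidableEq V] {k : ℕ}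
    (P : Fin k → Finset V × Finset V) : Prop :=
  (∀ i j, i ≠ j →
      Disjoint (P i).1 (P j).1 ∧ Disjoint (P i).2 (P j).2 ∧
        Disjoint (P i).1 (P j).2) ∧
  (∀ i, Disjoint (P i).1 (P i).2 ∧ ((P i).1 ∪ (P i).2).Nonempty)

/-- The `k`-way dual Cheeger constant. -/
noncomputable def rhoBar {V : Type*} [Fintype V] [DecidableEq V]
    (w : V → V → ℝ) (k : ℕ) : ℝ :=
  sSup {x : ℝ | ∃ P : Fin k → Finset V × Finset V,
    ValidPairs P ∧ x = ⨅ i, phiBar w (P i).1 (P i).2}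

lemma cutW_nonneg {V : Type*} (w : V → V → ℝ) (hw : ∀ u v, 0 ≤ w u v)
    (A B : Finset V) : 0 ≤ cutW w A B :=
  Finset.sum_nonneg fun u _ => Finset.sum_nonneg fun v _ => hw u v

lemma volW_nonneg {V : Type*} [Fintype V] (w : V → V → ℝ) (hw : ∀ u v, 0 ≤ w u v)
    (S : Finset V) : 0 ≤ volW w S :=
  Finset.sum_nonneg fun u _ => Finset.sum_nonneg fun v _ => hw u v

lemma phiBar_nonneg {V : Type*} [Fintype V] [DecidableEq V]
    (w : V → V → ℝ) (hw : ∀ u v, 0 ≤ w u v) (A B : Finset V) :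
    0 ≤ phiBar w A B :=
  div_nonneg (by linarith [cutW_nonneg w hw A B]) (volW_nonneg w hw _)

/-- If `H` (on the same vertex set as `G`) preserves the optimal cuts up to a
factor `α` and all volumes up to factors `β₁, β₂`, then
`\bar{ρ}_H(k) ≥ (α/β₂) \bar{ρ}_G(k)`. -/
theorem dual_cheeger_preserved
    {V : Type*} [Fintype V] [DecidableEq V]
    (wG wH : V → V → ℝ)
    (hGsym : ∀ u v, wG u v = wG v u) (hGnn : ∀ u v, 0 ≤ wG u v)
    (hHsym : ∀ u v, wH u v = wH v u) (hHnn : ∀ u v, 0 ≤ wH u v)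
    (k : ℕ) (hk : 0 < k)
    (α β₁ β₂ : ℝ) (hα : 0 < α) (hβ₁ : 0 < β₁) (hβ₂ : 0 < β₂)
    (P : Fin k → Finset V × Finset V) (hP : ValidPairs P)
    (hopt : (⨅ i, phiBar wG (P i).1 (P i).2) = rhoBar wG k)
    (hcut : ∀ i, α * cutW wG (P i).1 (P i).2 ≤ cutW wH (P i).1 (P i).2)
    (hvol : ∀ S : Finset V, β₁ * volW wG S ≤ volW wH S ∧
        volW wH S ≤ β₂ * volW wG S) :
    (α / β₂) * rhoBar wG k ≤ rhoBar wH k := by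
  haveI : Nonempty (Fin k) := ⟨⟨0, hk⟩⟩
  have key : ∀ i, (α / β₂) * phiBar wG (P i).1 (P i).2 ≤ phiBar wH (P i).1 (P i).2 := by
    intro i
    set A := (P i).1; set B := (P i).2
    have hcGnn : 0 ≤ cutW wG A B := cutW_nonneg wG hGnn A B
    have hvGnn : 0 ≤ volW wG (A ∪ B) := volW_nonneg wG hGnn _
    rcases eq_or_lt_of_le hvGnn with h0 | hpos
    · have : phiBar wG A B = 0 := by simp [phiBar, ← h0]
      rw [this, mul_zero]
      exact phiBar_nonneg wH hHnn A B
    · have hvH_le : volW wH (A ∪ B) ≤ β₂ * volW wG (A ∪ B) := (hvol (A ∪ B)).2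
      have hvH_pos : 0 < volW wH (A ∪ B) :=
        lt_of_lt_of_le (by positivity) ((hvol (A ∪ B)).1)
      have hcH : α * cutW wG A B ≤ cutW wH A B := hcut i
      have : (α / β₂) * phiBar wG A B = 2 * (α * cutW wG A B) / (β₂ * volW wG (A ∪ B)) := by
        rw [phiBar]; field_simp
      rw [this, phiBar]
      exact div_le_div₀ (by linarith [cutW_nonneg wH hHnn A B]) (by linarith) hvH_pos hvH_le
  have hmemH : (⨅ i, phiBar wH (P i).1 (P i).2) ∈
      {x : ℝ | ∃ Q : Fin k → Finset V × Finset V,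
        ValidPairs Q ∧ x = ⨅ i, phiBar wH (Q i).1 (Q i).2} := ⟨P, hP, rfl⟩
  have hbddH : BddAbove {x : ℝ | ∃ Q : Fin k → Finset V × Finset V,
      ValidPairs Q ∧ x = ⨅ i, phiBar wH (Q i).1 (Q i).2} := by
    apply Set.Finite.bddAbove
    apply Set.Finite.subset (Set.finite_range
      (fun Q : Fin k → Finset V × Finset V => ⨅ i, phiBar wH (Q i).1 (Q i).2))
    rintro x ⟨Q, _, rfl⟩
    exact ⟨Q, rfl⟩
  have hbdd_below : BddBelow (Set.range fun i => phiBar wG (P i).1 (P i).2) :=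
    (Set.finite_range _).bddBelow
  have step1 : (α / β₂) * rhoBar wG k ≤ ⨅ i, phiBar wH (P i).1 (P i).2 := by
    rw [← hopt]
    apply le_ciInf
    intro i
    calc (α / β₂) * ⨅ j, phiBar wG (P j).1 (P j).2
        ≤ (α / β₂) * phiBar wG (P i).1 (P i).2 :=
          mul_le_mul_of_nonneg_left (ciInf_le hbdd_below i) (by positivity)
      _ ≤ _ := key i
  exact step1.trans (le_csSup hbddH hmemH)
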